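/- The set {m·1 + a·x + b·x^2 + c·x^3 + d·x^4 : m,a,b,c,d ∈ N, and the tuple lies in one of the families (m+1, 0, 1, 0, 0), (m, n, 0, 0, 0), (m, 0, 0, n, 0), (0, m, n, 0, 0), (0, 0, m, n, 0) for m,n ≥ 0} is a set of normal forms for the semiring N[x]/(x = 1 + x + x^2): every element of N[x] is congruent to exactly one element of this set. -/

import Mathlib

open Polynomial

section FLaux

abbrev rr : Polynomial ℕ → Polynomial ℕ → Prop := fun a b => a = X ∧ b = 1 + X + X ^ 2
abbrev cc : Polynomial ℕ → Polynomial ℕ → Prop := RingConGen.Rel rr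

lemma cc_base : cc X (1 + X + X ^ 2) := RingConGen.Rel.of _ _ ⟨rfl, rfl⟩
lemma cc_refl (p : Polynomial ℕ) : cc p p := RingConGen.Rel.refl p
lemma cc_symm {a b} (h : cc a b) : cc b a := RingConGen.Rel.symm h
lemma cc_trans {a b c} (h : cc a b) (h' : cc b c) : cc a c := RingConGen.Rel.trans h h'
lemma cc_add {a b c d} (h : cc a b) (h' : cc c d) : cc (a+c) (b+d) := RingConGen.Rel.add h h'
lemma cc_mul {a b c d} (h : cc a b) (h' : cc c d) : cc (a*c) (b*d) := RingConGen.Rel.mul h h'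
lemma cc_eq {a b a' b'} (h : cc a b) (ha : a = a') (hb : b = b') : cc a' b' := ha ▸ hb ▸ h

lemma cc_mono (k : ℕ) : cc (X^(k+1)) (X^(k+1) + X^k*(1+X^2)) :=
  cc_eq (cc_mul cc_base (cc_refl (X^k))) (by ring) (by ring)

lemma cc_up : ∀ d j : ℕ, cc (X^(j+1)) (X^(j+1) + X^(j+d)*(1+X^2))
  | 0, j => cc_mono j
  | d+1, j => by
    have h1 := cc_mono j
    have h2 : cc (X^(j+1) + X^j*(1+X^2)) (X^(j+1) + X^j*(1+X^2) + X^(j+(d+1))*(1+X^2)) := by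
      have := cc_add (cc_refl (X^j + X^(j+1))) (cc_up d (j+1))
      exact cc_eq this (by ring) (by ring)
    have h3 : cc (X^(j+1) + X^(j+(d+1))*(1+X^2)) (X^(j+1) + X^j*(1+X^2) + X^(j+(d+1))*(1+X^2)) :=
      cc_eq (cc_add (cc_mono j) (cc_refl (X^(j+(d+1))*(1+X^2)))) rfl rfl
    exact cc_trans (cc_trans h1 h2) (cc_symm h3)

lemma cc_down : ∀ d j : ℕ, d ≤ j → cc (X^(j+1)) (X^(j+1) + X^(j-d)*(1+X^2))
  | 0, j, _ => by simpa using cc_mono j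
  | d+1, j, hd => by
    have hj : 1 ≤ j := le_trans (Nat.succ_le_succ (Nat.zero_le d)) hd
    have hjj : j - 1 + 1 = j := Nat.succ_pred_eq_of_pos hj
    have h1 := cc_mono j
    have h2 : cc (X^(j+1) + X^j*(1+X^2)) (X^(j+1) + X^j*(1+X^2) + X^(j-(d+1))*(1+X^2)) := by
      have := cc_add (cc_refl (X^(j+1) + X^(j+1+1))) (cc_down d (j-1) (by omega))
      refine cc_eq this ?_ ?_
      · rw [hjj]; ring
      · rw [hjj, show j - 1 - d = j - (d+1) by omega]; ring
    have h3 : cc (X^(j+1) + X^(j-(d+1))*(1+X^2)) (X^(j+1) + X^j*(1+X^2) + X^(j-(d+1))*(1+X^2)) :=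
      cc_add (cc_mono j) (cc_refl _)
    exact cc_trans (cc_trans h1 h2) (cc_symm h3)

lemma cc_pump (j k : ℕ) : cc (X^(j+1)) (X^(j+1) + X^k*(1+X^2)) := by
  rcases le_or_gt j k with h | h
  · simpa [show j + (k - j) = k by omega] using cc_up (k-j) j
  · simpa [show j - (j - k) = k by omega] using cc_down (j-k) j (by omega)

/-- nonconstant witness -/
def NC (p : Polynomial ℕ) : Prop := ∃ j, j ≠ 0 ∧ p.coeff j ≠ 0

lemma nc_of_not_const {p : Polynomial ℕ} (h : ¬ ∃ n, p = C n) : NC p := by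
  have hp0 : p ≠ 0 := fun h0 => h ⟨0, by simp [h0]⟩
  refine ⟨p.natDegree, ?_, ?_⟩
  · intro hd
    exact h ⟨p.coeff 0, (Polynomial.eq_C_of_natDegree_eq_zero hd)⟩
  · exact Polynomial.leadingCoeff_ne_zero.mpr hp0

lemma nc_add_left {p : Polynomial ℕ} (h : NC p) (t : Polynomial ℕ) : NC (p + t) := by
  obtain ⟨j, hj, hc⟩ := h
  exact ⟨j, hj, by simp [Polynomial.coeff_add]; omega⟩

lemma split_of_coeff {p : Polynomial ℕ} {j : ℕ} (h : p.coeff j ≠ 0) :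
    ∃ u, p = u + X^j := by
  refine ⟨monomial j (p.coeff j - 1) + p.erase j, ?_⟩
  have h1 : monomial j (p.coeff j - 1) + X^j = monomial j (p.coeff j) := by
    rw [X_pow_eq_monomial, ← (monomial j).map_add]
    congr 1; omega
  calc p = monomial j (p.coeff j) + p.erase j := (Polynomial.monomial_add_erase p j).symm
    _ = _ := by rw [← h1]; ring

lemma cc_pump_nc {p : Polynomial ℕ} (h : NC p) (k : ℕ) : cc p (p + X^k*(1+X^2)) := by
  obtain ⟨j, hj, hc⟩ := h
  obtain ⟨j', rfl⟩ : ∃ j', j = j' + 1 := ⟨j - 1, by omega⟩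
  obtain ⟨u, rfl⟩ := split_of_coeff hc
  exact cc_eq (cc_add (cc_refl u) (cc_pump j' k)) rfl (by ring)

lemma cc_pump_poly {p : Polynomial ℕ} (h : NC p) (t : Polynomial ℕ) :
    cc p (p + (1+X^2)*t) := by
  induction t using Polynomial.induction_on' generalizing p with
  | add f g ihf ihg =>
    have h2 := ihg (nc_add_left h ((1+X^2)*f))
    exact cc_eq (cc_trans (ihf h) h2) rfl (by ring)
  | monomial n a =>
    rw [← C_mul_X_pow_eq_monomial]
    induction a generalizing p with
    | zero => exact cc_eq (cc_refl p) rfl (by simp)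
    | succ a iha =>
      have h1 := iha h
      have h2 := cc_pump_nc (nc_add_left h ((1+X^2)*(C a * X^n))) n
      refine cc_eq (cc_trans h1 h2) rfl ?_
      rw [show (a+1 : ℕ) = a + 1 from rfl, map_add, C_1]; ring

noncomputable def phi : Polynomial ℕ →+* GaussianInt :=
  Polynomial.eval₂RingHom (Nat.castRingHom GaussianInt) ⟨0,1⟩

lemma phi_X : phi X = ⟨0,1⟩ := Polynomial.eval₂_X _ _
lemma phi_rel : phi X = phi (1 + X + X^2) := by
  simp only [map_add, map_pow, map_one, phi_X]
  ext <;> simp [pow_two, Zsqrtd.re_mul, Zsqrtd.im_mul, Zsqrtd.re_one, Zsqrtd.im_one,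
    Zsqrtd.re_add, Zsqrtd.im_add]

/-- Soundness: congruent polynomials have equal Gaussian values. -/
lemma cc_phi {a b : Polynomial ℕ} (h : cc a b) : phi a = phi b := by
  induction h with
  | of x y hxy => rw [hxy.1, hxy.2]; exact phi_rel
  | refl x => rfl
  | symm _ ih => exact ih.symm
  | trans _ _ ih1 ih2 => exact ih1.trans ih2
  | add _ _ ih1 ih2 => simp [map_add, ih1, ih2]
  | mul _ _ ih1 ih2 => simp [map_mul, ih1, ih2]

lemma const_of_add_const {a b : Polynomial ℕ} {n : ℕ} (h : a + b = C n) : ∃ m, a = C m := by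
  refine ⟨a.coeff 0, ?_⟩
  ext k
  rcases Nat.eq_zero_or_pos k with rfl | hk
  · simp
  · have := congrArg (fun p => Polynomial.coeff p k) h
    simp only [Polynomial.coeff_add, Polynomial.coeff_C] at this ⊢
    rw [if_neg (by omega)] at this ⊢
    omega

/-- Rigidity: if one side of a congruence is a constant, both sides are equal. -/
lemma cc_rigid {a b : Polynomial ℕ} (h : cc a b) :
    ((∃ n, a = C n) ∨ (∃ n, b = C n)) → a = b := by
  induction h with
  | of x y hxy =>
    rintro (⟨n, hn⟩ | ⟨n, hn⟩)
    · rw [hxy.1] at hn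
      have := congrArg (fun p => Polynomial.coeff p 1) hn
      simp at this
    · rw [hxy.2] at hn
      have := congrArg (fun p => Polynomial.coeff p 1) hn
      simp [Polynomial.coeff_one, Polynomial.coeff_C] at this
  | refl x => intro; rfl
  | symm _ ih => intro hc; exact (ih (hc.symm)).symm
  | trans _ _ ih1 ih2 =>
    rintro (⟨n, hn⟩ | ⟨n, hn⟩)
    · have h1 := ih1 (Or.inl ⟨n, hn⟩)
      have h2 := ih2 (Or.inl ⟨n, h1 ▸ hn⟩)
      exact h1.trans h2
    · have h2 := ih2 (Or.inr ⟨n, hn⟩)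
      have h1 := ih1 (Or.inr ⟨n, h2 ▸ hn⟩)
      exact h1.trans h2
  | add h1 h2 ih1 ih2 =>
    rintro (⟨n, hn⟩ | ⟨n, hn⟩)
    · obtain ⟨m1, hm1⟩ := const_of_add_const hn
      obtain ⟨m2, hm2⟩ := const_of_add_const (by rw [add_comm] at hn; exact hn)
      rw [ih1 (Or.inl ⟨m1, hm1⟩), ih2 (Or.inl ⟨m2, hm2⟩)]
    · obtain ⟨m1, hm1⟩ := const_of_add_const hn
      obtain ⟨m2, hm2⟩ := const_of_add_const (by rw [add_comm] at hn; exact hn)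
      rw [ih1 (Or.inr ⟨m1, hm1⟩), ih2 (Or.inr ⟨m2, hm2⟩)]
  | mul h1 h2 ih1 ih2 =>
    have key : ∀ (w x y z : Polynomial ℕ), (((∃ n, w = C n) → w = x)) → ((∃ n, y = C n) → y = z)
        → (∃ n, w * y = C n) → w * y = x * z := by
      intro w x y z ihw ihy ⟨n, hn⟩
      by_cases hw : w = 0
      · have hwx := ihw ⟨0, by simp [hw]⟩
        rw [hw] at hwx ⊢; rw [← hwx]; simp
      by_cases hy : y = 0
      · have hyz := ihy ⟨0, by simp [hy]⟩
        rw [hy] at hyz ⊢; rw [← hyz]; simp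
      have hdeg : w.natDegree + y.natDegree = 0 := by
        rw [← Polynomial.natDegree_mul hw hy, hn]
        simp
      have hw0 : w.natDegree = 0 := by omega
      have hy0 : y.natDegree = 0 := by omega
      rw [ihw ⟨w.coeff 0, Polynomial.eq_C_of_natDegree_eq_zero hw0⟩,
        ihy ⟨y.coeff 0, Polynomial.eq_C_of_natDegree_eq_zero hy0⟩]
    rintro (hc | hc)
    · exact key _ _ _ _ (fun h => ih1 (Or.inl h)) (fun h => ih2 (Or.inl h)) hc
    · exact (key _ _ _ _ (fun h => (ih1 (Or.inr h)).symm) (fun h => (ih2 (Or.inr h)).symm) hc).symm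


noncomputable def natZ : Polynomial ℕ →+* Polynomial ℤ :=
  Polynomial.mapRingHom (Nat.castRingHom ℤ)

noncomputable def psi : Polynomial ℤ →+* GaussianInt :=
  Polynomial.eval₂RingHom (Int.castRingHom GaussianInt) ⟨0,1⟩

lemma natZ_inj : Function.Injective natZ :=
  Polynomial.map_injective _ (fun a b h => Nat.cast_injective h)

lemma psi_toZ (p : Polynomial ℕ) : psi (natZ p) = phi p := by
  simp [psi, natZ, phi, Polynomial.eval₂_map]
  rfl

lemma psi_sq : psi (X^2 + 1) = 0 := by
  simp only [map_add, map_pow, map_one, psi, Polynomial.coe_eval₂RingHom, Polynomial.eval₂_X]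
  ext <;> simp [pow_two, Zsqrtd.re_mul, Zsqrtd.im_mul, Zsqrtd.re_one, Zsqrtd.im_one,
    Zsqrtd.re_add, Zsqrtd.im_add]

/-- positive/negative part decomposition -/
lemma posneg (h : Polynomial ℤ) : ∃ t s : Polynomial ℕ, h + natZ t = natZ s := by
  induction h using Polynomial.induction_on' with
  | add f g ihf ihg =>
    obtain ⟨t1, s1, h1⟩ := ihf
    obtain ⟨t2, s2, h2⟩ := ihg
    exact ⟨t1 + t2, s1 + s2, by rw [map_add, map_add]; linear_combination h1 + h2⟩
  | monomial n a =>
    rw [← C_mul_X_pow_eq_monomial]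
    rcases le_or_gt 0 a with ha | ha
    · refine ⟨0, C a.toNat * X^n, ?_⟩
      simp only [natZ, Polynomial.coe_mapRingHom, Polynomial.map_mul, Polynomial.map_pow,
        Polynomial.map_X, Polynomial.map_C, Polynomial.map_zero, map_natCast, zero_add]
      rw [show ((Nat.castRingHom ℤ) a.toNat : ℤ) = a by simp [Int.toNat_of_nonneg ha]]
      ring
    · refine ⟨C (-a).toNat * X^n, 0, ?_⟩
      simp only [natZ, Polynomial.coe_mapRingHom, Polynomial.map_mul, Polynomial.map_pow,
        Polynomial.map_X, Polynomial.map_C, Polynomial.map_zero, map_natCast]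
      have : ((Nat.castRingHom ℤ) (-a).toNat : ℤ) = -a := by
        simp [Int.toNat_of_nonneg (by omega : (0:ℤ) ≤ -a)]
      rw [this]
      ring_nf
      rw [map_neg]
      ring

lemma psi_C (a : ℤ) : psi (C a) = (⟨a, 0⟩ : GaussianInt) := by
  simp only [psi, Polynomial.coe_eval₂RingHom, Polynomial.eval₂_C]
  ext <;> simp [Zsqrtd.re_intCast, Zsqrtd.im_intCast]

lemma exists_add_eq {p q : Polynomial ℕ} (h : phi p = phi q) :
    ∃ t s : Polynomial ℕ, p + (1+X^2)*t = q + (1+X^2)*s := by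
  have hmonic : (X^2 + 1 : Polynomial ℤ).Monic := by
    apply Polynomial.monic_X_pow_add
    simp [Polynomial.degree_one]
  set f : Polynomial ℤ := natZ p - natZ q with hf
  have hrem := Polynomial.modByMonic_add_div f (X^2 + 1 : Polynomial ℤ)
  have hpsif : psi f = 0 := by rw [hf, map_sub, psi_toZ, psi_toZ, h, sub_self]
  have hdeg : (f %ₘ (X^2+1)).degree < 2 := by
    have := Polynomial.degree_modByMonic_lt f hmonic
    have h2 : (X^2 + 1 : Polynomial ℤ).degree = 2 := by
      rw [show (1 : Polynomial ℤ) = C 1 by simp]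
      exact Polynomial.degree_X_pow_add_C (by norm_num) 1
    rwa [h2] at this
  set r := f %ₘ (X^2+1) with hrdef
  have hr1 : r.degree ≤ 1 := by
    rcases Polynomial.degree_le_iff_coeff_zero r 1 |>.symm with _
    exact Order.le_of_lt_succ (by exact_mod_cast hdeg)
  have hrform : r = C (r.coeff 1) * X + C (r.coeff 0) :=
    Polynomial.eq_X_add_C_of_degree_le_one hr1
  have hpsir : psi r = 0 := by
    have := congrArg psi hrem
    rw [map_add, map_mul, psi_sq, hpsif, zero_mul, add_zero] at this
    exact this
  have hr0 : r = 0 := by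
    rw [hrform] at hpsir
    rw [map_add, map_mul, psi_C, psi_C] at hpsir
    have hX : psi X = (⟨0,1⟩ : GaussianInt) := Polynomial.eval₂_X _ _
    rw [hX] at hpsir
    have hre := congrArg Zsqrtd.re hpsir
    have him := congrArg Zsqrtd.im hpsir
    simp [Zsqrtd.re_mul, Zsqrtd.im_mul, Zsqrtd.re_add, Zsqrtd.im_add] at hre him
    rw [hrform, hre, him]
    simp
  rw [hr0, zero_add] at hrem
  obtain ⟨t, s, hts⟩ := posneg (f /ₘ (X^2+1))
  refine ⟨t, s, natZ_inj ?_⟩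
  have expand : ∀ u v : Polynomial ℕ, natZ (u + (1+X^2)*v)
      = natZ u + (1+X^2) * natZ v := by
    intro u v
    rw [map_add, map_mul]
    congr 1
    congr 1
    simp [natZ]
  rw [expand, expand]
  have hf' : natZ p - natZ q = (X^2+1) * (f /ₘ (X^2+1)) := hf ▸ hrem.symm
  linear_combination hf' + (X^2+1) * hts


lemma phi_val2 (a b : ℕ) : phi ((a : Polynomial ℕ) + (b : Polynomial ℕ) * X) = ⟨a, b⟩ := by
  simp only [map_add, map_mul, map_natCast, phi_X]
  ext <;> simp [Zsqrtd.re_mul, Zsqrtd.im_mul, Zsqrtd.re_add, Zsqrtd.im_add]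

lemma phi_val3 (a b : ℕ) : phi ((a : Polynomial ℕ) + (b : Polynomial ℕ) * X^3) = ⟨a, -b⟩ := by
  simp only [map_add, map_mul, map_pow, map_natCast, phi_X]
  ext <;> simp [pow_succ, pow_zero, Zsqrtd.re_mul, Zsqrtd.im_mul, Zsqrtd.re_add, Zsqrtd.im_add]

lemma phi_val4 (a b : ℕ) : phi ((a : Polynomial ℕ) * X + (b : Polynomial ℕ) * X^2) = ⟨-b, a⟩ := by
  simp only [map_add, map_mul, map_pow, map_natCast, phi_X]
  ext <;> simp [pow_succ, pow_zero, Zsqrtd.re_mul, Zsqrtd.im_mul, Zsqrtd.re_add, Zsqrtd.im_add]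

lemma phi_val5 (a b : ℕ) : phi ((a : Polynomial ℕ) * X^2 + (b : Polynomial ℕ) * X^3) = ⟨-a, -b⟩ := by
  simp only [map_add, map_mul, map_pow, map_natCast, phi_X]
  ext <;> simp [pow_succ, pow_zero, Zsqrtd.re_mul, Zsqrtd.im_mul, Zsqrtd.re_add, Zsqrtd.im_add]

lemma phi_val1 (m : ℕ) : phi (((m + 1 : ℕ) : Polynomial ℕ) + X^2) = ⟨m, 0⟩ := by
  simp only [map_add, map_pow, map_natCast, phi_X]
  ext <;> simp [pow_succ, pow_zero, Zsqrtd.re_mul, Zsqrtd.im_mul, Zsqrtd.re_add, Zsqrtd.im_add]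

def Fam (q : Polynomial ℕ) : Prop :=
  (∃ m : ℕ, q = ((m + 1 : ℕ) : Polynomial ℕ) + X ^ 2) ∨
  (∃ m n : ℕ, q = (m : Polynomial ℕ) + (n : Polynomial ℕ) * X) ∨
  (∃ m n : ℕ, q = (m : Polynomial ℕ) + (n : Polynomial ℕ) * X ^ 3) ∨
  (∃ m n : ℕ, q = (m : Polynomial ℕ) * X + (n : Polynomial ℕ) * X ^ 2) ∨
  (∃ m n : ℕ, q = (m : Polynomial ℕ) * X ^ 2 + (n : Polynomial ℕ) * X ^ 3)

noncomputable def NF (z : GaussianInt) : Polynomial ℕ :=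
  if 0 < z.im then
    if 0 ≤ z.re then (z.re.toNat : Polynomial ℕ) + (z.im.toNat : Polynomial ℕ) * X
    else (z.im.toNat : Polynomial ℕ) * X + ((-z.re).toNat : Polynomial ℕ) * X^2
  else if z.im = 0 then
    if 0 ≤ z.re then ((z.re.toNat + 1 : ℕ) : Polynomial ℕ) + X^2
    else ((0 : ℕ) : Polynomial ℕ) * X + ((-z.re).toNat : Polynomial ℕ) * X^2
  else
    if 0 ≤ z.re then (z.re.toNat : Polynomial ℕ) + ((-z.im).toNat : Polynomial ℕ) * X^3
    else ((-z.re).toNat : Polynomial ℕ) * X^2 + ((-z.im).toNat : Polynomial ℕ) * X^3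

lemma NF_mem (z : GaussianInt) : Fam (NF z) := by
  unfold NF Fam
  split_ifs
  · exact Or.inr (Or.inl ⟨_, _, rfl⟩)
  · exact Or.inr (Or.inr (Or.inr (Or.inl ⟨_, _, rfl⟩)))
  · exact Or.inl ⟨_, rfl⟩
  · exact Or.inr (Or.inr (Or.inr (Or.inl ⟨_, _, rfl⟩)))
  · exact Or.inr (Or.inr (Or.inl ⟨_, _, rfl⟩))
  · exact Or.inr (Or.inr (Or.inr (Or.inr ⟨_, _, rfl⟩)))

lemma NF_value (z : GaussianInt) : phi (NF z) = z := by
  obtain ⟨a, b⟩ := z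
  unfold NF
  simp only
  split_ifs with h1 h2 h3 h4 h5 h6 <;>
    simp_all only [phi_val1, phi_val2, phi_val3, phi_val4, phi_val5] <;>
    · ext <;> simp <;> omega


lemma coeff_fam (a b : ℕ) (k : ℕ) (hk : k ≠ 0) :
    ((a : Polynomial ℕ) + (b : Polynomial ℕ) * X^k).coeff k = b := by
  rw [← Polynomial.C_eq_natCast, ← Polynomial.C_eq_natCast]
  simp [Polynomial.coeff_add, Polynomial.coeff_C, Polynomial.coeff_C_mul,
    Polynomial.coeff_X_pow, hk]

lemma NF_nc (z : GaussianInt) : NC (NF z) := by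
  obtain ⟨a, b⟩ := z
  unfold NF
  simp only
  split_ifs with h1 h2 h3 h4 h5 h6
  · exact ⟨1, one_ne_zero, by rw [show (X : Polynomial ℕ) = X^1 by ring, coeff_fam _ _ 1 one_ne_zero]; omega⟩
  · refine ⟨2, two_ne_zero, ?_⟩
    rw [← Polynomial.C_eq_natCast, ← Polynomial.C_eq_natCast]
    simp [Polynomial.coeff_add, Polynomial.coeff_C_mul, Polynomial.coeff_X_pow, Polynomial.coeff_X]
    omega
  · refine ⟨2, two_ne_zero, ?_⟩
    rw [← Polynomial.C_eq_natCast]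
    simp [Polynomial.coeff_add, Polynomial.coeff_C, Polynomial.coeff_X_pow]
  · refine ⟨2, two_ne_zero, ?_⟩
    rw [← Polynomial.C_eq_natCast, ← Polynomial.C_eq_natCast]
    simp [Polynomial.coeff_add, Polynomial.coeff_C_mul, Polynomial.coeff_X_pow, Polynomial.coeff_X]
    omega
  · exact ⟨3, three_ne_zero, by rw [coeff_fam _ _ 3 three_ne_zero]; omega⟩
  · refine ⟨3, three_ne_zero, ?_⟩
    rw [← Polynomial.C_eq_natCast, ← Polynomial.C_eq_natCast]
    simp [Polynomial.coeff_add, Polynomial.coeff_C_mul, Polynomial.coeff_X_pow]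
    omega

lemma NF_correct {q : Polynomial ℕ} (hf : Fam q) (hnc : ¬ ∃ n, q = C n) : q = NF (phi q) := by
  rcases hf with ⟨m, rfl⟩ | ⟨m, n, rfl⟩ | ⟨m, n, rfl⟩ | ⟨m, n, rfl⟩ | ⟨m, n, rfl⟩
  · rw [phi_val1]; unfold NF
    split_ifs with h1 h2 h3 <;> simp_all <;> first | omega | (push_cast; ring)
  · have hn : n ≠ 0 := by
      rintro rfl
      exact hnc ⟨m, by simp [Polynomial.C_eq_natCast]⟩
    rw [phi_val2]; unfold NF
    split_ifs with h1 h2 h3 h4 <;> simp_all <;> first | omega | (push_cast; ring)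
  · have hn : n ≠ 0 := by
      rintro rfl
      exact hnc ⟨m, by simp [Polynomial.C_eq_natCast]⟩
    rw [phi_val3]; unfold NF
    split_ifs with h1 h2 h3 h4 <;> simp_all <;> first | omega | (push_cast; ring)
  · have hmn : ¬(m = 0 ∧ n = 0) := by
      rintro ⟨rfl, rfl⟩
      exact hnc ⟨0, by simp⟩
    rw [phi_val4]; unfold NF
    split_ifs with h1 h2 h3 h4 <;> simp_all <;> first | omega | (push_cast; ring)
  · have hmn : ¬(m = 0 ∧ n = 0) := by
      rintro ⟨rfl, rfl⟩
      exact hnc ⟨0, by simp⟩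
    rw [phi_val5]; unfold NF
    split_ifs with h1 h2 h3 h4 <;> simp_all <;> first | omega | (push_cast; ring)

end FLaux

/-- Fiore–Leinster normal forms for `ℕ[x]/(x = 1 + x + x²)`: every polynomial
is congruent to exactly one element of the displayed set. -/
theorem stmt_12 :
    ∀ p : Polynomial ℕ, ∃! q : Polynomial ℕ,
      ((∃ m : ℕ, q = ((m + 1 : ℕ) : Polynomial ℕ) + X ^ 2) ∨
       (∃ m n : ℕ, q = (m : Polynomial ℕ) + (n : Polynomial ℕ) * X) ∨
       (∃ m n : ℕ, q = (m : Polynomial ℕ) + (n : Polynomial ℕ) * X ^ 3) ∨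
       (∃ m n : ℕ, q = (m : Polynomial ℕ) * X + (n : Polynomial ℕ) * X ^ 2) ∨
       (∃ m n : ℕ, q = (m : Polynomial ℕ) * X ^ 2 + (n : Polynomial ℕ) * X ^ 3)) ∧
      (ringConGen (fun a b : Polynomial ℕ => a = X ∧ b = 1 + X + X ^ 2)) p q := by
  intro p
  by_cases hp : ∃ n, p = C n
  · obtain ⟨n, rfl⟩ := hp
    refine ⟨C n, ⟨Or.inr (Or.inl ⟨n, 0, by simp [Polynomial.C_eq_natCast]⟩),
      RingConGen.Rel.refl _⟩, ?_⟩
    rintro q ⟨_, hq⟩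
    exact (cc_rigid hq (Or.inl ⟨n, rfl⟩)).symm
  · have hnc : NC p := nc_of_not_const hp
    have hqnc : NC (NF (phi p)) := NF_nc (phi p)
    have hval : phi p = phi (NF (phi p)) := by rw [NF_value]
    obtain ⟨t, s, hts⟩ := exists_add_eq hval
    have h1 : cc p (NF (phi p)) :=
      cc_trans (cc_eq (cc_pump_poly hnc t) rfl hts) (cc_symm (cc_pump_poly hqnc s))
    refine ⟨NF (phi p), ⟨NF_mem (phi p), h1⟩, ?_⟩
    rintro q ⟨hqf, hq⟩
    have hq' : cc p q := hq
    have hqnotc : ¬ ∃ n, q = C n := by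
      rintro ⟨n, rfl⟩
      exact hp ⟨n, cc_rigid hq' (Or.inr ⟨n, rfl⟩)⟩
    have h2 : q = NF (phi q) := NF_correct hqf hqnotc
    rw [h2, ← cc_phi hq']
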